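/- arXiv:2112.11321 — 4 statements merged into one kernel-verified Lean document; each statement's English description precedes it below -/
import Mathlib

section
/- If the set of free states is closed under tensor products (σ₁, σ₂ ∈ F implies σ₁ ⊗ σ₂ ∈ F), then the projective robustness is submultiplicative: Ω_F(ρ ⊗ ω) ≤ Ω_F(ρ)·Ω_F(ω) for all states ρ, ω. -/
open scoped ENNReal ComplexOrder
open Matrix

noncomputable section

variable {ι κ : Type*}

/-- Loewner order: `A ≤ B` iff `B - A` is positive semidefinite. -/
def Loe [Fintype ι] (A B : Matrix ι ι ℂ) : Prop := (B - A).PosSemidef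

/-- The (non-logarithmic) max-relative entropy `Rmax(ρ‖σ) = inf {λ : ρ ≤ λσ}`,
with the convention `inf ∅ = ∞`. -/
noncomputable def Rmax [Fintype ι] (ρ σ : Matrix ι ι ℂ) : ℝ≥0∞ :=
  sInf {x : ℝ≥0∞ | ∃ l : ℝ, 0 ≤ l ∧ x = ENNReal.ofReal l ∧ ((l : ℂ) • σ - ρ).PosSemidef}

/-- A density matrix: positive semidefinite with unit trace. -/
def IsState [Fintype ι] (ρ : Matrix ι ι ℂ) : Prop := ρ.PosSemidef ∧ ρ.trace = 1

/-- The projective robustness `Ω_F(ρ) = inf_{σ∈F} Rmax(ρ‖σ) · Rmax(σ‖ρ)`. -/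
noncomputable def Omega [Fintype ι] (F : Set (Matrix ι ι ℂ)) (ρ : Matrix ι ι ℂ) : ℝ≥0∞ :=
  ⨅ σ ∈ F, Rmax ρ σ * Rmax σ ρ

/-- The cone generated by `F`: `{cσ : c ≥ 0, σ ∈ F}`. -/
def coneF [Fintype ι] (F : Set (Matrix ι ι ℂ)) : Set (Matrix ι ι ℂ) :=
  {X | ∃ c : ℝ, 0 ≤ c ∧ ∃ σ ∈ F, X = (c : ℂ) • σ}

/-- The affine hull of `F` (real affine combinations). -/
def affHull [Fintype ι] (F : Set (Matrix ι ι ℂ)) : Set (Matrix ι ι ℂ) :=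
  {Z | ∃ (k : ℕ) (c : Fin k → ℝ) (σ : Fin k → Matrix ι ι ℂ),
    (∀ i, σ i ∈ F) ∧ (∑ i, c i) = 1 ∧ Z = ∑ i, ((c i : ℂ) • σ i)}

/-- The generalised robustness `R_F(ρ) = inf_{σ∈F} Rmax(ρ‖σ)`. -/
noncomputable def RF [Fintype ι] (F : Set (Matrix ι ι ℂ)) (ρ : Matrix ι ι ℂ) : ℝ≥0∞ :=
  ⨅ σ ∈ F, Rmax ρ σ

/-- The resource weight `W_F(ρ) = (inf_{σ∈F} Rmax(σ‖ρ))⁻¹`. -/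
noncomputable def WF [Fintype ι] (F : Set (Matrix ι ι ℂ)) (ρ : Matrix ι ι ℂ) : ℝ≥0∞ :=
  (⨅ σ ∈ F, Rmax σ ρ)⁻¹

/-- Kronecker products of PSD matrices are PSD. -/
lemma psd_kron [Fintype ι] [Fintype κ] {A : Matrix ι ι ℂ} {B : Matrix κ κ ℂ}
    (hA : A.PosSemidef) (hB : B.PosSemidef) : (Matrix.kroneckerMap (· * ·) A B).PosSemidef := by
  exact hA.kronecker hB

/-- PSD matrices have nonnegative trace. -/
lemma psd_trace_nonneg [Fintype ι] [DecidableEq ι] {M : Matrix ι ι ℂ} (hM : M.PosSemidef) :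
    0 ≤ M.trace := by
  have : ∀ i, 0 ≤ M i i := fun i => by
    exact hM.diag_nonneg
  exact Finset.sum_nonneg fun i _ => this i

/-- For states, `Rmax ≥ 1`. -/
lemma one_le_rmax [Fintype ι] [DecidableEq ι] {ρ σ : Matrix ι ι ℂ}
    (hρ : IsState ρ) (hσ : IsState σ) : (1 : ℝ≥0∞) ≤ Rmax ρ σ := by
  refine le_sInf fun x hx => ?_
  obtain ⟨l, hl0, rfl, hpsd⟩ := hx
  have htr : 0 ≤ ((l : ℂ) • σ - ρ).trace := psd_trace_nonneg hpsd
  rw [Matrix.trace_sub, Matrix.trace_smul, hρ.2, hσ.2, smul_eq_mul] at htr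
  have : ((l : ℂ) * (1 : ℂ) - 1) = (((l - 1 : ℝ)) : ℂ) := by push_cast; ring
  rw [this] at htr
  have h1l : 1 ≤ l := by linarith [(Complex.zero_le_real).mp htr]
  exact ENNReal.one_le_ofReal.mpr h1l

/-- Submultiplicativity of `Rmax` under Kronecker products. -/
lemma rmax_kron_le [Fintype ι] [Fintype κ] {A C : Matrix ι ι ℂ} {B D : Matrix κ κ ℂ}
    (hA : A.PosSemidef) (hB : B.PosSemidef)
    (h1 : Rmax A C ≠ 0) (h2 : Rmax B D ≠ 0) :
    Rmax (Matrix.kroneckerMap (· * ·) A B) (Matrix.kroneckerMap (· * ·) C D)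
      ≤ Rmax A C * Rmax B D := by
  by_cases hT1 : Rmax A C = ⊤
  · rw [hT1, ENNReal.top_mul h2]; exact le_top
  by_cases hT2 : Rmax B D = ⊤
  · rw [hT2, ENNReal.mul_top h1]; exact le_top
  -- The key pointwise bound
  have key : ∀ x ∈ {x : ℝ≥0∞ | ∃ l : ℝ, 0 ≤ l ∧ x = ENNReal.ofReal l ∧
        ((l : ℂ) • C - A).PosSemidef},
      ∀ y ∈ {x : ℝ≥0∞ | ∃ l : ℝ, 0 ≤ l ∧ x = ENNReal.ofReal l ∧
        ((l : ℂ) • D - B).PosSemidef},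
      Rmax (Matrix.kroneckerMap (· * ·) A B) (Matrix.kroneckerMap (· * ·) C D) ≤ x * y := by
    rintro x ⟨l, hl0, rfl, hlC⟩ y ⟨m, hm0, rfl, hmD⟩
    refine sInf_le ⟨l * m, mul_nonneg hl0 hm0, (ENNReal.ofReal_mul hl0).symm, ?_⟩
    have hmDpsd : ((m : ℂ) • D).PosSemidef := by
      have := hmD.add hB
      simpa using this
    have hdecomp : ((l * m : ℝ) : ℂ) • Matrix.kroneckerMap (· * ·) C D
          - Matrix.kroneckerMap (· * ·) A B
        = Matrix.kroneckerMap (· * ·) ((l : ℂ) • C - A) ((m : ℂ) • D)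
          + Matrix.kroneckerMap (· * ·) A ((m : ℂ) • D - B) := by
      ext ⟨i, k⟩ ⟨j, r⟩
      simp only [Matrix.add_apply, Matrix.sub_apply, Matrix.smul_apply,
        Matrix.kroneckerMap_apply, smul_eq_mul]
      push_cast
      ring
    rw [hdecomp]
    exact (psd_kron hlC hmDpsd).add (psd_kron hA hmD)
  -- Combine via products of infima
  have eq1 : Rmax A C = ⨅ x : {x : ℝ≥0∞ | ∃ l : ℝ, 0 ≤ l ∧ x = ENNReal.ofReal l ∧
      ((l : ℂ) • C - A).PosSemidef}, (x : ℝ≥0∞) := by rw [Rmax, sInf_eq_iInf']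
  have eq2 : Rmax B D = ⨅ x : {x : ℝ≥0∞ | ∃ l : ℝ, 0 ≤ l ∧ x = ENNReal.ofReal l ∧
      ((l : ℂ) • D - B).PosSemidef}, (x : ℝ≥0∞) := by rw [Rmax, sInf_eq_iInf']
  rw [eq1, eq2]
  have hfne : ∃ x : {x : ℝ≥0∞ | ∃ l : ℝ, 0 ≤ l ∧ x = ENNReal.ofReal l ∧
      ((l : ℂ) • C - A).PosSemidef}, (x : ℝ≥0∞) ≠ ⊤ := by
    by_contra h
    push_neg at h
    exact hT1 (by rw [eq1]; simp only [iInf_eq_top]; exact fun x => h x)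
  have hgne : ∃ x : {x : ℝ≥0∞ | ∃ l : ℝ, 0 ≤ l ∧ x = ENNReal.ofReal l ∧
      ((l : ℂ) • D - B).PosSemidef}, (x : ℝ≥0∞) ≠ ⊤ := by
    by_contra h
    push_neg at h
    exact hT2 (by rw [eq2]; simp only [iInf_eq_top]; exact fun x => h x)
  exact ENNReal.le_iInf_mul_iInf hfne hgne fun x y => key x x.2 y y.2

/-- If tensor products of free states are free, the projective robustness is
submultiplicative: `Ω(ρ ⊗ ω) ≤ Ω(ρ)·Ω(ω)`. -/
theorem omega_submultiplicative [Fintype ι] [DecidableEq ι] [Fintype κ] [DecidableEq κ]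
    (F : Set (Matrix ι ι ℂ)) (G : Set (Matrix κ κ ℂ)) (H : Set (Matrix (ι × κ) (ι × κ) ℂ))
    (hF : IsClosed F) (hG : IsClosed G) (hH : IsClosed H)
    (hFstates : ∀ σ ∈ F, IsState σ) (hGstates : ∀ σ ∈ G, IsState σ)
    (hHstates : ∀ σ ∈ H, IsState σ)
    (htensor : ∀ σ ∈ F, ∀ τ ∈ G, Matrix.kroneckerMap (· * ·) σ τ ∈ H)
    (ρ : Matrix ι ι ℂ) (ω : Matrix κ κ ℂ) (hρ : IsState ρ) (hω : IsState ω) :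
    Omega H (Matrix.kroneckerMap (· * ·) ρ ω) ≤ Omega F ρ * Omega G ω := by
  have hk : ∀ σ ∈ F, ∀ τ ∈ G, Omega H (Matrix.kroneckerMap (· * ·) ρ ω)
      ≤ (Rmax ρ σ * Rmax σ ρ) * (Rmax ω τ * Rmax τ ω) := by
    intro σ hσ τ hτ
    have hσs := hFstates σ hσ
    have hτs := hGstates τ hτ
    have step1 : Omega H (Matrix.kroneckerMap (· * ·) ρ ω)
        ≤ Rmax (Matrix.kroneckerMap (· * ·) ρ ω) (Matrix.kroneckerMap (· * ·) σ τ)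
          * Rmax (Matrix.kroneckerMap (· * ·) σ τ) (Matrix.kroneckerMap (· * ·) ρ ω) :=
      iInf₂_le _ (htensor σ hσ τ hτ)
    have n1 : Rmax ρ σ ≠ 0 := fun h => by simpa [h] using one_le_rmax hρ hσs
    have n2 : Rmax ω τ ≠ 0 := fun h => by simpa [h] using one_le_rmax hω hτs
    have n3 : Rmax σ ρ ≠ 0 := fun h => by simpa [h] using one_le_rmax hσs hρ
    have n4 : Rmax τ ω ≠ 0 := fun h => by simpa [h] using one_le_rmax hτs hω
    refine step1.trans ?_
    calc Rmax (Matrix.kroneckerMap (· * ·) ρ ω) (Matrix.kroneckerMap (· * ·) σ τ)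
          * Rmax (Matrix.kroneckerMap (· * ·) σ τ) (Matrix.kroneckerMap (· * ·) ρ ω)
        ≤ (Rmax ρ σ * Rmax ω τ) * (Rmax σ ρ * Rmax τ ω) :=
          mul_le_mul' (rmax_kron_le hρ.1 hω.1 n1 n2) (rmax_kron_le hσs.1 hτs.1 n3 n4)
      _ = (Rmax ρ σ * Rmax σ ρ) * (Rmax ω τ * Rmax τ ω) := mul_mul_mul_comm _ _ _ _
  have h1F : (1 : ℝ≥0∞) ≤ Omega F ρ := by
    refine le_iInf₂ fun σ hσ => ?_
    have hσs := hFstates σ hσ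
    calc (1:ℝ≥0∞) = 1 * 1 := (one_mul 1).symm
      _ ≤ _ := mul_le_mul' (one_le_rmax hρ hσs) (one_le_rmax hσs hρ)
  have h1G : (1 : ℝ≥0∞) ≤ Omega G ω := by
    refine le_iInf₂ fun τ hτ => ?_
    have hτs := hGstates τ hτ
    calc (1:ℝ≥0∞) = 1 * 1 := (one_mul 1).symm
      _ ≤ _ := mul_le_mul' (one_le_rmax hω hτs) (one_le_rmax hτs hω)
  by_cases hTF : Omega F ρ = ⊤
  · rw [hTF, ENNReal.top_mul (by positivity : Omega G ω ≠ 0)]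
    exact le_top
  by_cases hTG : Omega G ω = ⊤
  · rw [hTG, ENNReal.mul_top (by positivity : Omega F ρ ≠ 0)]
    exact le_top
  have eqF : Omega F ρ = ⨅ σ : F, Rmax ρ (σ : Matrix ι ι ℂ) * Rmax (σ : Matrix ι ι ℂ) ρ := by
    rw [Omega, iInf_subtype']
  have eqG : Omega G ω = ⨅ τ : G, Rmax ω (τ : Matrix κ κ ℂ) * Rmax (τ : Matrix κ κ ℂ) ω := by
    rw [Omega, iInf_subtype']
  rw [eqF, eqG]
  have hfne : ∃ σ : F, Rmax ρ (σ : Matrix ι ι ℂ) * Rmax (σ : Matrix ι ι ℂ) ρ ≠ ⊤ := by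
    by_contra h
    push_neg at h
    exact hTF (by rw [eqF]; simp only [iInf_eq_top]; exact fun x => h x)
  have hgne : ∃ τ : G, Rmax ω (τ : Matrix κ κ ℂ) * Rmax (τ : Matrix κ κ ℂ) ω ≠ ⊤ := by
    by_contra h
    push_neg at h
    exact hTG (by rw [eqG]; simp only [iInf_eq_top]; exact fun x => h x)
  exact ENNReal.le_iInf_mul_iInf hfne hgne fun σ τ => hk σ σ.2 τ τ.2
end
end

section
/- When F is convex, the projective robustness is quasiconvex: for any states ρ, ω and t ∈ [0,1], Ω_F(tρ + (1−t)ω) ≤ max{Ω_F(ρ), Ω_F(ω)}. -/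
open scoped ENNReal ComplexOrder
open Matrix

noncomputable section

variable {ι κ : Type*}

lemma psd_smul_real [Fintype ι] {c : ℝ} (hc : 0 ≤ c) {A : Matrix ι ι ℂ} (hA : A.PosSemidef) :
    ((c : ℂ) • A).PosSemidef := by
  rw [Matrix.posSemidef_iff_dotProduct_mulVec]
  constructor
  · unfold Matrix.IsHermitian
    rw [Matrix.conjTranspose_smul, hA.1]
    congr 1
    simp [Complex.ext_iff]
  · intro x
    rw [Matrix.smul_mulVec, dotProduct_smul, smul_eq_mul]
    exact mul_nonneg (by exact_mod_cast hc) (hA.dotProduct_mulVec_nonneg x)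

lemma psd_trace_nonneg_s6 [Fintype ι] {A : Matrix ι ι ℂ} (hA : A.PosSemidef) : 0 ≤ A.trace := by
  classical
  rw [Matrix.trace]
  refine Finset.sum_nonneg fun i _ => ?_
  have h := hA.dotProduct_mulVec_nonneg (Pi.single i 1)
  have hst : star (Pi.single i (1:ℂ)) = (Pi.single i 1 : ι → ℂ) := by
    ext j; simp [Pi.single_apply, apply_ite (star : ℂ → ℂ)]
  rw [hst] at h
  simpa [single_dotProduct] using h

lemma real_smul_mat [Fintype ι] (r : ℝ) (A : Matrix ι ι ℂ) : r • A = (r : ℂ) • A := by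
  ext i j
  simp [Complex.real_smul]

lemma one_le_of_feas [Fintype ι] {ρ σ : Matrix ι ι ℂ} (hρ : IsState ρ) (hσ : IsState σ)
    {l : ℝ} (h : ((l : ℂ) • σ - ρ).PosSemidef) : 1 ≤ l := by
  have := psd_trace_nonneg_s6 h
  rw [Matrix.trace_sub, Matrix.trace_smul, hρ.2, hσ.2] at this
  have : (0:ℂ) ≤ ((l - 1 : ℝ) : ℂ) := by push_cast; simpa using this
  rw [Complex.zero_le_real] at this
  linarith


lemma Rmax_le' [Fintype ι] {ρ σ : Matrix ι ι ℂ} {l : ℝ} (hl : 0 ≤ l)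
    (h : ((l : ℂ) • σ - ρ).PosSemidef) : Rmax ρ σ ≤ ENNReal.ofReal l :=
  sInf_le ⟨l, hl, rfl, h⟩

lemma one_le_Rmax' [Fintype ι] {ρ σ : Matrix ι ι ℂ} (hρ : IsState ρ) (hσ : IsState σ) :
    1 ≤ Rmax ρ σ := by
  refine le_sInf ?_
  rintro x ⟨l, hl0, rfl, hpsd⟩
  have h1 := one_le_of_feas hρ hσ hpsd
  exact ENNReal.one_le_ofReal.mpr h1

lemma extract_witness [Fintype ι] {F : Set (Matrix ι ι ℂ)}
    (hFstates : ∀ σ ∈ F, IsState σ) {ρ : Matrix ι ι ℂ} (hρ : IsState ρ)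
    {K : ℝ≥0∞} (hK : K ≠ ⊤) (h : Omega F ρ < K) :
    ∃ σ ∈ F, ∃ l m : ℝ, 1 ≤ l ∧ 1 ≤ m ∧ ENNReal.ofReal (l * m) < K ∧
      ((l : ℂ) • σ - ρ).PosSemidef ∧ ((m : ℂ) • ρ - σ).PosSemidef := by
  rw [Omega, iInf_lt_iff] at h
  obtain ⟨σ, h⟩ := h
  rw [iInf_lt_iff] at h
  obtain ⟨hσF, hlt⟩ := h
  have hσ := hFstates σ hσF
  have h1ρ : 1 ≤ Rmax ρ σ := one_le_Rmax' hρ hσ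
  have h1σ : 1 ≤ Rmax σ ρ := one_le_Rmax' hσ hρ
  have hσ0 : Rmax σ ρ ≠ 0 := (zero_lt_one.trans_le h1σ).ne'
  have hσtop : Rmax σ ρ ≠ ⊤ := by
    intro htop
    rw [htop, ENNReal.mul_top (zero_lt_one.trans_le h1ρ).ne'] at hlt
    exact (hK (top_le_iff.mp hlt.le)).elim
  have h1 : Rmax ρ σ < K / Rmax σ ρ :=
    (ENNReal.lt_div_iff_mul_lt (Or.inl hσ0) (Or.inl hσtop)).mpr hlt
  rw [Rmax, sInf_lt_iff] at h1
  obtain ⟨x, ⟨l, hl0, rfl, hlpsd⟩, hxlt⟩ := h1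
  have hl1 : 1 ≤ l := one_le_of_feas hρ hσ hlpsd
  have h2 : ENNReal.ofReal l * Rmax σ ρ < K := ENNReal.mul_lt_of_lt_div hxlt
  have hx0 : ENNReal.ofReal l ≠ 0 := (zero_lt_one.trans_le (ENNReal.one_le_ofReal.mpr hl1)).ne'
  have h3 : Rmax σ ρ < K / ENNReal.ofReal l := by
    rw [ENNReal.lt_div_iff_mul_lt (Or.inl hx0) (Or.inl ENNReal.ofReal_ne_top)]
    rwa [mul_comm]
  rw [Rmax, sInf_lt_iff] at h3
  obtain ⟨y, ⟨m, hm0, rfl, hmpsd⟩, hylt⟩ := h3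
  have hm1 : 1 ≤ m := one_le_of_feas hσ hρ hmpsd
  refine ⟨σ, hσF, l, m, hl1, hm1, ?_, hlpsd, hmpsd⟩
  rw [ENNReal.ofReal_mul hl0]
  have := ENNReal.mul_lt_of_lt_div hylt
  rwa [mul_comm]

/-- When `F` is convex, the projective robustness is quasiconvex. -/
theorem omega_quasiconvex [Fintype ι]
    (F : Set (Matrix ι ι ℂ)) (hF : IsClosed F) (hconv : Convex ℝ F)
    (hFstates : ∀ σ ∈ F, IsState σ)
    (ρ ω : Matrix ι ι ℂ) (hρ : IsState ρ) (hω : IsState ω)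
    (t : ℝ) (ht0 : 0 ≤ t) (ht1 : t ≤ 1) :
    Omega F ((t : ℂ) • ρ + ((1 - t : ℝ) : ℂ) • ω) ≤ max (Omega F ρ) (Omega F ω) := by
  refine ENNReal.le_of_forall_pos_le_add fun ε hε hmax => ?_
  have hKne : max (Omega F ρ) (Omega F ω) + ε ≠ ⊤ :=
    ENNReal.add_ne_top.mpr ⟨hmax.ne, ENNReal.coe_ne_top⟩
  have hKlt : max (Omega F ρ) (Omega F ω) < max (Omega F ρ) (Omega F ω) + ε :=
    ENNReal.lt_add_right hmax.ne (ENNReal.coe_ne_zero.mpr hε.ne')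
  set K := max (Omega F ρ) (Omega F ω) + ε with hK
  obtain ⟨σ, hσF, l, m, hl1, hm1, hlmK, hpsd1, hpsd2⟩ :=
    extract_witness hFstates hρ hKne ((le_max_left _ _).trans_lt hKlt)
  obtain ⟨σ', hσ'F, l', m', hl'1, hm'1, hl'm'K, hpsd1', hpsd2'⟩ :=
    extract_witness hFstates hω hKne ((le_max_right _ _).trans_lt hKlt)
  set s : ℝ := t * l + (1 - t) * l' with hs
  have hs1 : (1 : ℝ) ≤ s := by nlinarith
  have hs0 : s ≠ 0 := by positivity
  have hsC : (s : ℂ) ≠ 0 := Complex.ofReal_ne_zero.mpr hs0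
  set M : ℝ := max (l * m) (l' * m') with hM
  have hM1 : (1 : ℝ) ≤ M := le_trans (by nlinarith) (le_max_left _ _)
  have hMlm : l * m ≤ M := le_max_left _ _
  have hMl'm' : l' * m' ≤ M := le_max_right _ _
  set σ'' : Matrix ι ι ℂ := (t * l / s) • σ + ((1 - t) * l' / s) • σ' with hσ''
  have hmem : σ'' ∈ F := by
    refine hconv hσF hσ'F (div_nonneg (by nlinarith) (by linarith))
      (div_nonneg (by nlinarith) (by linarith)) ?_
    field_simp
    linarith
  have e1 : (s : ℂ) • σ'' - ((t : ℂ) • ρ + ((1 - t : ℝ) : ℂ) • ω)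
      = (t : ℂ) • ((l : ℂ) • σ - ρ) + ((1 - t : ℝ) : ℂ) • ((l' : ℂ) • σ' - ω) := by
    rw [hσ'', real_smul_mat, real_smul_mat]
    push_cast
    match_scalars <;> field_simp [hsC] <;> ring
  have hfeas1 : ((s : ℂ) • σ'' - ((t : ℂ) • ρ + ((1 - t : ℝ) : ℂ) • ω)).PosSemidef := by
    rw [e1]
    exact (psd_smul_real ht0 hpsd1).add (psd_smul_real (by linarith) hpsd1')
  have hX : ((((t * (M - l * m) : ℝ)) : ℂ) • ρ + (((t * l : ℝ)) : ℂ) • ((m : ℂ) • ρ - σ)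
      + ((((1 - t) * (M - l' * m') : ℝ)) : ℂ) • ω
      + ((((1 - t) * l' : ℝ)) : ℂ) • ((m' : ℂ) • ω - σ')).PosSemidef :=
    (((psd_smul_real (by nlinarith) hρ.1).add (psd_smul_real (by nlinarith) hpsd2)).add
      (psd_smul_real (by nlinarith) hω.1)).add (psd_smul_real (by nlinarith) hpsd2')
  have e2 : ((M / s : ℝ) : ℂ) • ((t : ℂ) • ρ + ((1 - t : ℝ) : ℂ) • ω) - σ''
      = ((1 / s : ℝ) : ℂ) • ((((t * (M - l * m) : ℝ)) : ℂ) • ρ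
        + (((t * l : ℝ)) : ℂ) • ((m : ℂ) • ρ - σ)
        + ((((1 - t) * (M - l' * m') : ℝ)) : ℂ) • ω
        + ((((1 - t) * l' : ℝ)) : ℂ) • ((m' : ℂ) • ω - σ')) := by
    rw [hσ'', real_smul_mat, real_smul_mat]
    push_cast
    match_scalars <;> field_simp [hsC] <;> ring
  have hfeas2 : (((M / s : ℝ) : ℂ) • ((t : ℂ) • ρ + ((1 - t : ℝ) : ℂ) • ω) - σ'').PosSemidef := by
    rw [e2]
    exact psd_smul_real (by positivity) hX
  have hMK : ENNReal.ofReal M < K := by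
    rcases le_total (l * m) (l' * m') with h | h
    · rw [hM, max_eq_right h]; exact hl'm'K
    · rw [hM, max_eq_left h]; exact hlmK
  calc Omega F ((t : ℂ) • ρ + ((1 - t : ℝ) : ℂ) • ω)
      ≤ Rmax ((t : ℂ) • ρ + ((1 - t : ℝ) : ℂ) • ω) σ''
        * Rmax σ'' ((t : ℂ) • ρ + ((1 - t : ℝ) : ℂ) • ω) := by
        rw [Omega]; exact iInf₂_le σ'' hmem
    _ ≤ ENNReal.ofReal s * ENNReal.ofReal (M / s) :=
        mul_le_mul' (Rmax_le' (by linarith) hfeas1)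
          (Rmax_le' (div_nonneg (by linarith) (by linarith)) hfeas2)
    _ = ENNReal.ofReal M := by
        rw [← ENNReal.ofReal_mul (by linarith)]
        congr 1
        field_simp
    _ ≤ K := hMK.le
end
end

section
/- Bound on probabilistic distillation error via the projective robustness: let φ be a pure state with F_F(φ) := max_{σ∈F} ⟨φ|σ|φ⟩ < 1, and let τ be a state with ⟨φ|τ|φ⟩ ≥ 1 − ε for ε ∈ (0,1]. Then Ω_F(τ) ≥ (1−ε)(1−F_F(φ)) / (ε·F_F(φ)). -/
open scoped ENNReal ComplexOrder
open Matrix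

noncomputable section

variable {ι κ : Type*}

lemma quad_le_trace [Fintype ι] {A : Matrix ι ι ℂ} (hA : A.PosSemidef)
    (ψ : ι → ℂ) (hψ : star ψ ⬝ᵥ ψ = 1) :
    (star ψ ⬝ᵥ (A *ᵥ ψ)).re ≤ A.trace.re := by
  classical
  obtain ⟨B, rfl⟩ : ∃ B : Matrix ι ι ℂ, A = Bᴴ * B := by
    open scoped MatrixOrder in
    exact CStarAlgebra.nonneg_iff_eq_star_mul_self.mp hA.nonneg
  have hquad : star ψ ⬝ᵥ ((Bᴴ * B) *ᵥ ψ) = star (B *ᵥ ψ) ⬝ᵥ (B *ᵥ ψ) := by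
    rw [← mulVec_mulVec, dotProduct_mulVec, star_mulVec]
  set v : EuclideanSpace ℂ ι := (WithLp.equiv 2 (ι → ℂ)).symm ψ with hv
  have hvj : ∀ j, v j = ψ j := fun j => rfl
  have hψnorm : ‖v‖ ^ 2 = 1 := by
    have h2 := @inner_self_eq_norm_sq ℂ _ _ _ _ v
    rw [← h2]
    simp only [PiLp.inner_apply, RCLike.inner_apply, hvj]
    have h3 : (∑ j, starRingEnd ℂ (ψ j) * ψ j) = 1 := by
      simpa [dotProduct, Pi.star_apply, RCLike.star_def] using hψ
    simpa [Complex.mul_re] using congrArg Complex.re h3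
  have key : ∀ i, ‖(B *ᵥ ψ) i‖ ^ 2 ≤ ∑ j, ‖B i j‖ ^ 2 := by
    intro i
    set u : EuclideanSpace ℂ ι := (WithLp.equiv 2 (ι → ℂ)).symm (fun j => star (B i j)) with hu
    have huj : ∀ j, u j = star (B i j) := fun j => rfl
    have hinner : (inner ℂ u v : ℂ) = (B *ᵥ ψ) i := by
      simp [PiLp.inner_apply, RCLike.inner_apply, huj, hvj, mulVec, dotProduct,
        RCLike.star_def, mul_comm]
    have hcs := norm_inner_le_norm (𝕜 := ℂ) u v
    have hsq : ‖(inner ℂ u v : ℂ)‖ ^ 2 ≤ ‖u‖ ^ 2 * ‖v‖ ^ 2 := by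
      rw [← mul_pow]
      exact pow_le_pow_left₀ (norm_nonneg _) hcs 2
    have hunorm : ‖u‖ ^ 2 = ∑ j, ‖B i j‖ ^ 2 := by
      have h2 := @inner_self_eq_norm_sq ℂ _ _ _ _ u
      rw [← h2]
      simp only [PiLp.inner_apply, RCLike.inner_apply, huj]
      simp [RCLike.star_def, Complex.conj_conj, ← Complex.normSq_eq_norm_sq, Complex.mul_conj',
        Complex.normSq_eq_norm_sq]
      simp [Complex.sq_norm, Complex.normSq_apply]
    rw [hinner, hψnorm, mul_one, hunorm] at hsq
    exact hsq
  have hqre : (star ψ ⬝ᵥ ((Bᴴ * B) *ᵥ ψ)).re = ∑ i, ‖(B *ᵥ ψ) i‖ ^ 2 := by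
    rw [hquad]
    simp [dotProduct, Pi.star_apply, RCLike.star_def]
    simp [Complex.sq_norm, Complex.normSq_apply]
  have htr : (Bᴴ * B).trace.re = ∑ j, ∑ i, ‖B i j‖ ^ 2 := by
    simp [Matrix.trace, Matrix.diag, Matrix.mul_apply, conjTranspose_apply]
    simp [Complex.sq_norm, Complex.normSq_apply]
  rw [hqre, htr, Finset.sum_comm]
  exact Finset.sum_le_sum fun i _ => key i

lemma quad_smul_sub [Fintype ι] (ψ : ι → ℂ) (c : ℝ) (X Y : Matrix ι ι ℂ) :
    (star ψ ⬝ᵥ (((c : ℂ) • X - Y) *ᵥ ψ)).re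
      = c * (star ψ ⬝ᵥ (X *ᵥ ψ)).re - (star ψ ⬝ᵥ (Y *ᵥ ψ)).re := by
  rw [sub_mulVec, dotProduct_sub, smul_mulVec, dotProduct_smul, smul_eq_mul,
    Complex.sub_re, Complex.mul_re, Complex.ofReal_re, Complex.ofReal_im, zero_mul, sub_zero]


/-- Distillation error bound via the projective robustness: if `φ = |ψ⟩⟨ψ|`
is a pure state with `F_F(φ) = f < 1`, and `τ` is a state with `⟨φ|τ|φ⟩ ≥ 1 - ε`, then
`Ω_F(τ) ≥ (1-ε)(1-f)/(εf)` (with the convention `a/0 = ∞` for `a ≠ 0`). -/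
theorem omega_distillation_error_bound [Fintype ι]
    (F : Set (Matrix ι ι ℂ)) (hF : IsClosed F) (hFstates : ∀ σ ∈ F, IsState σ)
    (ψ : ι → ℂ) (hψ : star ψ ⬝ᵥ ψ = 1)
    (f : ℝ) (hf0 : 0 ≤ f) (hf1 : f < 1)
    (hfmax : ∀ σ ∈ F, (star ψ ⬝ᵥ (σ *ᵥ ψ)).re ≤ f)
    (ε : ℝ) (hε0 : 0 < ε) (hε1 : ε ≤ 1)
    (τ : Matrix ι ι ℂ) (hτ : IsState τ)
    (hfid : 1 - ε ≤ (star ψ ⬝ᵥ (τ *ᵥ ψ)).re) :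
    ENNReal.ofReal ((1 - ε) * (1 - f)) / ENNReal.ofReal (ε * f) ≤ Omega F τ := by
  rcases eq_or_lt_of_le hε1 with hε | hε
  · rw [hε]
    simp
  have h1ε : 0 < 1 - ε := by linarith
  rw [Omega]
  refine le_iInf₂ fun σ hσF => ?_
  obtain ⟨hσpsd, hσtr⟩ := hFstates σ hσF
  obtain ⟨hτpsd, hτtr⟩ := hτ
  set s := (star ψ ⬝ᵥ (σ *ᵥ ψ)).re with hs
  set t := (star ψ ⬝ᵥ (τ *ᵥ ψ)).re with ht
  have hsf : s ≤ f := hfmax σ hσF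
  have lemA : ∀ l : ℝ, 0 ≤ l → ((l : ℂ) • σ - τ).PosSemidef → 1 - ε ≤ l * f := by
    intro l hl0 hpsd
    have h0 : (0 : ℝ) ≤ l * s - t := by
      have h1 := (Complex.le_def.mp (hpsd.dotProduct_mulVec_nonneg ψ)).1
      rwa [Complex.zero_re, quad_smul_sub] at h1
    have h2 : l * s ≤ l * f := mul_le_mul_of_nonneg_left hsf hl0
    linarith
  have lemB : ∀ m : ℝ, 0 ≤ m → ((m : ℂ) • τ - σ).PosSemidef → 1 - f ≤ m * ε := by
    intro m hm0 hpsd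
    have h1 := quad_le_trace hpsd ψ hψ
    rw [quad_smul_sub] at h1
    have htrace : ((m : ℂ) • τ - σ).trace = (m : ℂ) - 1 := by
      rw [trace_sub, trace_smul, hτtr, hσtr, smul_eq_mul, mul_one]
    rw [htrace, Complex.sub_re, Complex.ofReal_re, Complex.one_re] at h1
    have h1t : 1 - t ≤ ε := by linarith
    nlinarith [mul_le_mul_of_nonneg_left h1t hm0]
  have hB' : ENNReal.ofReal ((1 - f) / ε) ≤ Rmax σ τ := by
    refine le_sInf ?_
    rintro x ⟨m, hm0, rfl, hpsd⟩
    exact ENNReal.ofReal_le_ofReal ((div_le_iff₀ hε0).mpr (lemB m hm0 hpsd))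
  rcases eq_or_lt_of_le hf0 with hf | hf
  · have hAtop : Rmax τ σ = ⊤ := by
      refine sInf_eq_top.mpr ?_
      rintro x ⟨l, hl0, rfl, hpsd⟩
      have := lemA l hl0 hpsd
      rw [← hf, mul_zero] at this
      linarith
    have h1f : (0:ℝ) < 1 - f := by linarith
    have hBne : Rmax σ τ ≠ 0 :=
      (lt_of_lt_of_le (ENNReal.ofReal_pos.mpr (by positivity)) hB').ne'
    rw [hAtop, ENNReal.top_mul hBne]
    exact le_top
  · have hA' : ENNReal.ofReal ((1 - ε) / f) ≤ Rmax τ σ := by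
      refine le_sInf ?_
      rintro x ⟨l, hl0, rfl, hpsd⟩
      exact ENNReal.ofReal_le_ofReal ((div_le_iff₀ hf).mpr (lemA l hl0 hpsd))
    calc ENNReal.ofReal ((1 - ε) * (1 - f)) / ENNReal.ofReal (ε * f)
        = ENNReal.ofReal (((1 - ε) / f) * ((1 - f) / ε)) := by
          rw [← ENNReal.ofReal_div_of_pos (by positivity)]
          rw [div_mul_div_comm, mul_comm ε f]
      _ = ENNReal.ofReal ((1 - ε) / f) * ENNReal.ofReal ((1 - f) / ε) :=
          ENNReal.ofReal_mul (by positivity)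
      _ ≤ Rmax τ σ * Rmax σ τ := mul_le_mul' hA' hB'
end
end

section
/- Existence of a free probabilistic map from dual witnesses: suppose A, B are positive semidefinite operators with ⟨B,ρ⟩ = 1, ⟨A,ρ⟩ = λμ, and ⟨A,π⟩ ≤ ⟨B,π⟩ for all π ∈ F, and suppose σ' ∈ F, ρ'' a state satisfy ρ'' ≤ λσ' and σ' ≤ μρ''. Then the map E(X) := ⟨B,X⟩(λσ' − ρ'') + ⟨A,X⟩(ρ'' − (1/μ)σ') is completely positive, maps every π ∈ F into cone(F) whenever λσ' − ρ'' ∈ cone(F), and satisfies E(ρ) = (λμ − 1)ρ''. -/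
open scoped ENNReal ComplexOrder
open Matrix

noncomputable section

variable {ι κ : Type*}

lemma kron_ct [Fintype ι] [Fintype κ] (C : Matrix ι ι ℂ) (D : Matrix κ κ ℂ) :
    (Matrix.kroneckerMap (· * ·) C D)ᴴ = Matrix.kroneckerMap (· * ·) Cᴴ Dᴴ := by
  ext ⟨i, j⟩ ⟨k, l⟩
  simp [Matrix.kroneckerMap, Matrix.conjTranspose_apply, mul_comm]

lemma kron_psd [Fintype ι] [Fintype κ] [DecidableEq ι] [DecidableEq κ]
    {A : Matrix ι ι ℂ} {B : Matrix κ κ ℂ} (hA : A.PosSemidef) (hB : B.PosSemidef) :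
    (Matrix.kroneckerMap (· * ·) A B).PosSemidef := by
  obtain ⟨C, rfl⟩ : ∃ C : Matrix ι ι ℂ, A = Cᴴ * C := by
    open scoped MatrixOrder in exact CStarAlgebra.nonneg_iff_eq_star_mul_self.mp hA.nonneg
  obtain ⟨D, rfl⟩ : ∃ D : Matrix κ κ ℂ, B = Dᴴ * D := by
    open scoped MatrixOrder in exact CStarAlgebra.nonneg_iff_eq_star_mul_self.mp hB.nonneg
  rw [show Matrix.kroneckerMap (· * ·) (Cᴴ * C) (Dᴴ * D) =
      (Matrix.kroneckerMap (· * ·) C D)ᴴ * Matrix.kroneckerMap (· * ·) C D by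
    rw [kron_ct]; exact Matrix.mul_kronecker_mul Cᴴ C Dᴴ D]
  exact Matrix.posSemidef_conjTranspose_mul_self _

lemma trace_mul_psd_nonneg [Fintype ι] [DecidableEq ι] {A P : Matrix ι ι ℂ}
    (hA : A.PosSemidef) (hP : P.PosSemidef) : 0 ≤ (A * P).trace := by
  obtain ⟨C, rfl⟩ : ∃ C : Matrix ι ι ℂ, A = Cᴴ * C := by
    open scoped MatrixOrder in exact CStarAlgebra.nonneg_iff_eq_star_mul_self.mp hA.nonneg
  rw [Matrix.trace_mul_cycle, Matrix.trace_mul_cycle]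
  exact psd_trace_nonneg (hP.mul_mul_conjTranspose_same C)

lemma coneF_two [Fintype κ] {F' : Set (Matrix κ κ ℂ)} (hconv : Convex ℝ F')
    {c d : ℝ} (hc : 0 ≤ c) (hd : 0 ≤ d) {τ σ : Matrix κ κ ℂ} (hτ : τ ∈ F') (hσ : σ ∈ F') :
    (c : ℂ) • τ + (d : ℂ) • σ ∈ coneF F' := by
  rcases eq_or_lt_of_le (add_nonneg hc hd) with h | h
  · have hc0 : c = 0 := by linarith [hc, hd, h.symm ▸ (rfl : c + d = c + d)]
    have hd0 : d = 0 := by linarith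
    exact ⟨0, le_refl 0, σ, hσ, by simp [hc0, hd0]⟩
  · refine ⟨c + d, h.le, (c / (c + d)) • τ + (d / (c + d)) • σ,
      hconv hτ hσ (by positivity) (by positivity) (by field_simp), ?_⟩
    have hne : (c + d : ℝ) ≠ 0 := h.ne'
    have hne' : (c : ℂ) + d ≠ 0 := by exact_mod_cast hne
    rw [smul_add]
    congr 1 <;> rw [show ∀ (r : ℝ) (M : Matrix κ κ ℂ), r • M = (r : ℂ) • M from
      fun r M => by ext; simp [Complex.real_smul]] <;>
      rw [smul_smul] <;> congr 1 <;> push_cast <;> field_simp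


lemma psd_smul_real_s18 [Fintype κ] {M : Matrix κ κ ℂ} (hM : M.PosSemidef) {r : ℝ} (hr : 0 ≤ r) :
    ((r : ℂ) • M).PosSemidef := by
  constructor
  · unfold Matrix.IsHermitian
    rw [Matrix.conjTranspose_smul, hM.1.eq]
    congr 1
    simp [Complex.ext_iff]
  · intro x
    exact (hM.smul (Complex.zero_le_real.mpr hr)).2 x

lemma nonneg_complex_eq_re {a : ℂ} (ha : 0 ≤ a) : a = ((a.re : ℝ) : ℂ) := by
  have := (Complex.le_def.mp ha).2
  apply Complex.ext <;> simp [← this]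

/-- Existence of a free probabilistic map from dual witnesses: given PSD
`A, B` with `⟨B,ρ⟩ = 1`, `⟨A,ρ⟩ = λμ`, `⟨A,π⟩ ≤ ⟨B,π⟩` for all `π ∈ F`, and `σ' ∈ F'`,
a state `ρ''` with `ρ'' ≤ λσ'` and `σ' ≤ μρ''`, the map
`E(X) = ⟨B,X⟩(λσ' - ρ'') + ⟨A,X⟩(ρ'' - μ⁻¹σ')` is completely positive (its Choi operator
`B ⊗ (λσ'-ρ'') + A ⊗ (ρ''-μ⁻¹σ')` is PSD), maps every `π ∈ F` into `cone(F')` whenever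
`λσ' - ρ'' ∈ cone(F')`, and satisfies `E(ρ) = (λμ - 1)ρ''`. -/
theorem free_map_from_dual_witnesses [Fintype ι] [DecidableEq ι] [Fintype κ] [DecidableEq κ]
    (F : Set (Matrix ι ι ℂ)) (F' : Set (Matrix κ κ ℂ))
    (hF : IsClosed F) (hF' : IsClosed F') (hconv' : Convex ℝ F')
    (hFstates : ∀ π ∈ F, IsState π) (hF'states : ∀ σ ∈ F', IsState σ)
    (A B : Matrix ι ι ℂ) (hA : A.PosSemidef) (hB : B.PosSemidef)
    (ρ : Matrix ι ι ℂ) (hρ : IsState ρ)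
    (lam mu : ℝ) (hlam : 0 < lam) (hmu : 0 < mu)
    (hBρ : (B * ρ).trace = 1) (hAρ : (A * ρ).trace = ((lam * mu : ℝ) : ℂ))
    (hAB : ∀ π ∈ F, ((A * π).trace).re ≤ ((B * π).trace).re)
    (σ' : Matrix κ κ ℂ) (hσ' : σ' ∈ F') (ρ'' : Matrix κ κ ℂ) (hρ'' : IsState ρ'')
    (h1 : Loe ρ'' ((lam : ℂ) • σ')) (h2 : Loe σ' ((mu : ℂ) • ρ''))
    (E : Matrix ι ι ℂ → Matrix κ κ ℂ)
    (hEdef : E = fun X => ((B * X).trace) • ((lam : ℂ) • σ' - ρ'') +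
      ((A * X).trace) • (ρ'' - ((mu⁻¹ : ℝ) : ℂ) • σ')) :
    (Matrix.kroneckerMap (· * ·) B ((lam : ℂ) • σ' - ρ'') +
        Matrix.kroneckerMap (· * ·) A (ρ'' - ((mu⁻¹ : ℝ) : ℂ) • σ')).PosSemidef ∧
      (((lam : ℂ) • σ' - ρ'') ∈ coneF F' → ∀ π ∈ F, E π ∈ coneF F') ∧
      E ρ = ((lam * mu - 1 : ℝ) : ℂ) • ρ'' := by
  subst hEdef
  have hpsd1 : ((lam : ℂ) • σ' - ρ'').PosSemidef := h1
  have h2' : ((mu : ℂ) • ρ'' - σ').PosSemidef := h2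
  have hmuinv : 0 ≤ (mu⁻¹ : ℝ) := by positivity
  have hpsd2 : (ρ'' - ((mu⁻¹ : ℝ) : ℂ) • σ').PosSemidef := by
    have heq : ρ'' - ((mu⁻¹ : ℝ) : ℂ) • σ' = ((mu⁻¹ : ℝ) : ℂ) • ((mu : ℂ) • ρ'' - σ') := by
      rw [smul_sub, smul_smul]
      push_cast
      rw [inv_mul_cancel₀ (by exact_mod_cast hmu.ne')]
      simp
    rw [heq]
    exact psd_smul_real_s18 h2' hmuinv
  -- λμ ≥ 1
  have hσ'st := hF'states σ' hσ'
  have hsum : ((mu : ℂ) • ((lam : ℂ) • σ' - ρ'') + ((mu : ℂ) • ρ'' - σ')) =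
      (((lam * mu - 1 : ℝ)) : ℂ) • σ' := by
    push_cast
    module
  have hkey : (1 : ℝ) ≤ lam * mu := by
    have hps : ((((lam * mu - 1 : ℝ)) : ℂ) • σ').PosSemidef := by
      rw [← hsum]
      exact (psd_smul_real_s18 hpsd1 hmu.le).add h2'
    have htr := psd_trace_nonneg hps
    rw [Matrix.trace_smul, hσ'st.2, smul_eq_mul, mul_one] at htr
    have := Complex.zero_le_real.mp htr
    linarith
  have hlm : (0 : ℝ) ≤ lam - mu⁻¹ := by
    rw [sub_nonneg, inv_le_iff_one_le_mul₀ hmu]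
    linarith [hkey]
  refine ⟨(kron_psd hB hpsd1).add (kron_psd hA hpsd2), ?_, ?_⟩
  · rintro ⟨c, hc, τ, hτ, hcτ⟩ π hπ
    have hπst := hFstates π hπ
    set a := (A * π).trace with hadef
    set b := (B * π).trace with hbdef
    have ha : 0 ≤ a := trace_mul_psd_nonneg hA hπst.1
    have hb : 0 ≤ b := trace_mul_psd_nonneg hB hπst.1
    have ha' := nonneg_complex_eq_re ha
    have hb' := nonneg_complex_eq_re hb
    have hab : a.re ≤ b.re := hAB π hπ
    have key : b • ((lam : ℂ) • σ' - ρ'') + a • (ρ'' - ((mu⁻¹ : ℝ) : ℂ) • σ') =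
        (b - a) • ((lam : ℂ) • σ' - ρ'') + (a * ((lam : ℂ) - ((mu⁻¹ : ℝ) : ℂ))) • σ' := by
      match_scalars <;> ring
    simp only []
    rw [key, hcτ, smul_smul]
    have e1 : (b - a) * (c : ℂ) = (((b.re - a.re) * c : ℝ) : ℂ) := by
      conv_lhs => rw [hb', ha']
      push_cast
      ring
    have e2 : a * ((lam : ℂ) - ((mu⁻¹ : ℝ) : ℂ)) = ((a.re * (lam - mu⁻¹) : ℝ) : ℂ) := by
      conv_lhs => rw [ha']
      push_cast
      ring
    rw [e1, e2]
    exact coneF_two hconv' (mul_nonneg (by linarith) hc)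
      (mul_nonneg (Complex.zero_le_real.mp (ha' ▸ ha)) hlm) hτ hσ'
  · simp only []
    rw [hBρ, hAρ]
    have hmune : (mu : ℂ) ≠ 0 := by exact_mod_cast hmu.ne'
    match_scalars <;> push_cast <;> field_simp <;> ring
end
end
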